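/- (Spanning-set criterion for Lie bialgebroids.) Let (L, [·,·], ρ) and (L', [·,·]', ρ') be a dual pair of Lie–Rinehart algebras over R, and let S ⊆ L be a subset that spans L as an R-module. Suppose: (B1) D(a₁,a₂)(α₁,α₂) = 0 for all a₁, a₂ ∈ S and all α₁, α₂ ∈ L'; (B2) E(a,α)(f) = 0 for all a ∈ S, α ∈ L' and f ∈ R; and (B3) ρ'(d f)(g) + ρ'(d g)(f) = 0 for all f, g ∈ R. Then D(a₁,a₂)(α₁,α₂) = 0 for all a₁, a₂ ∈ L and α₁, α₂ ∈ L', i.e. the pair (L, L') satisfies the Lie bialgebroid equation. -/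
import Mathlib


/-- A Lie–Rinehart algebra over a commutative `ℝ`-algebra `R`. -/
structure LieRinehart (R : Type*) [CommRing R] [Algebra ℝ R]
    (L : Type*) [AddCommGroup L] [Module R L] where
  bracket : L → L → L
  bracket_add_left : ∀ x y z : L, bracket (x + y) z = bracket x z + bracket y z
  bracket_add_right : ∀ x y z : L, bracket x (y + z) = bracket x y + bracket x z
  bracket_real_left : ∀ (r : ℝ) (x y : L),
    bracket ((algebraMap ℝ R r) • x) y = (algebraMap ℝ R r) • bracket x y
  bracket_real_right : ∀ (r : ℝ) (x y : L),
    bracket x ((algebraMap ℝ R r) • y) = (algebraMap ℝ R r) • bracket x y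
  bracket_antisymm : ∀ x y : L, bracket x y = - bracket y x
  bracket_jacobi : ∀ x y z : L,
    bracket x (bracket y z) = bracket (bracket x y) z + bracket y (bracket x z)
  anchor : L →ₗ[R] Derivation ℝ R R
  anchor_bracket : ∀ x y : L, anchor (bracket x y) = ⁅anchor x, anchor y⁆
  leibniz : ∀ (f : R) (x y : L),
    bracket x (f • y) = f • bracket x y + (anchor x f) • y

/-- A dual pair of Lie–Rinehart algebras over `R`: two Lie–Rinehart algebras `L`, `L'`
with a nondegenerate `R`-bilinear pairing, Lie derivative operators `𝓛 : L × L' → L'`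
and `𝓛 : L' × L → L` characterized by the usual formulas, and a map `d : R → L'`
characterized by `⟨a, d f⟩ = ρ(a)(f)`. -/
structure LieRinehartDualPair (R : Type*) [CommRing R] [Algebra ℝ R]
    (L L' : Type*) [AddCommGroup L] [Module R L] [AddCommGroup L'] [Module R L'] where
  lr : LieRinehart R L
  lr' : LieRinehart R L'
  pair : L →ₗ[R] L' →ₗ[R] R
  nondeg_left : ∀ a : L, (∀ α : L', pair a α = 0) → a = 0
  nondeg_right : ∀ α : L', (∀ a : L, pair a α = 0) → α = 0
  lie : L → L' → L'
  lie' : L' → L → L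
  lie_spec : ∀ (a a' : L) (α : L'),
    pair a' (lie a α) = lr.anchor a (pair a' α) - pair (lr.bracket a a') α
  lie'_spec : ∀ (α α' : L') (a : L),
    pair (lie' α a) α' = lr'.anchor α (pair a α') - pair a (lr'.bracket α α')
  d : R → L'
  d_spec : ∀ (a : L) (f : R), pair a (d f) = lr.anchor a f

variable {R : Type*} [CommRing R] [Algebra ℝ R]
variable {L L' : Type*} [AddCommGroup L] [Module R L] [AddCommGroup L'] [Module R L']

/-- `(δa)(α₁,α₂) = ρ'(α₁)⟨a,α₂⟩ − ρ'(α₂)⟨a,α₁⟩ − ⟨a,[α₁,α₂]'⟩`. -/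
def LieRinehartDualPair.delta (P : LieRinehartDualPair R L L') (a : L) (α₁ α₂ : L') : R :=
  P.lr'.anchor α₁ (P.pair a α₂) - P.lr'.anchor α₂ (P.pair a α₁)
    - P.pair a (P.lr'.bracket α₁ α₂)

/-- `[δa₁, a₂](α₁,α₂) = −ρ(a₂)((δa₁)(α₁,α₂)) + (δa₁)(𝓛_{a₂}α₁, α₂) + (δa₁)(α₁, 𝓛_{a₂}α₂)`. -/
def LieRinehartDualPair.deltaBracket (P : LieRinehartDualPair R L L')
    (a₁ a₂ : L) (α₁ α₂ : L') : R :=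
  - P.lr.anchor a₂ (P.delta a₁ α₁ α₂) + P.delta a₁ (P.lie a₂ α₁) α₂
    + P.delta a₁ α₁ (P.lie a₂ α₂)

/-- The bialgebroid defect
`D(a₁,a₂)(α₁,α₂) = (δ[a₁,a₂])(α₁,α₂) − [δa₁,a₂](α₁,α₂) − [a₁,δa₂](α₁,α₂)`,
where `[a₁, δa₂] = −[δa₂, a₁]`. -/
def LieRinehartDualPair.D (P : LieRinehartDualPair R L L') (a₁ a₂ : L) (α₁ α₂ : L') : R :=
  P.delta (P.lr.bracket a₁ a₂) α₁ α₂ - P.deltaBracket a₁ a₂ α₁ α₂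
    + P.deltaBracket a₂ a₁ α₁ α₂

/-- `E(a,α)(f) = [ρ(a),ρ'(α)](f) − ρ'(𝓛_a α)(f) + ρ(𝓛_α a)(f) − ρ'(d f)(⟨a,α⟩)`. -/
def LieRinehartDualPair.E (P : LieRinehartDualPair R L L') (a : L) (α : L') (f : R) : R :=
  ⁅P.lr.anchor a, P.lr'.anchor α⁆ f - P.lr'.anchor (P.lie a α) f
    + P.lr.anchor (P.lie' α a) f - P.lr'.anchor (P.d f) (P.pair a α)

namespace LieRinehartAux


lemma bracket_smul_left {M : Type*} [AddCommGroup M] [Module R M]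
    (lr : LieRinehart R M) (f : R) (x y : M) :
    lr.bracket (f • x) y = f • lr.bracket x y - (lr.anchor y f) • x := by
  rw [lr.bracket_antisymm (f • x) y, lr.leibniz, lr.bracket_antisymm y x]
  module

lemma bracket_smul_right {M : Type*} [AddCommGroup M] [Module R M]
    (lr : LieRinehart R M) (f : R) (x y : M) :
    lr.bracket x (f • y) = f • lr.bracket x y + (lr.anchor x f) • y :=
  lr.leibniz f x y

variable (P : LieRinehartDualPair R L L')

lemma ext_right {α β : L'} (h : ∀ a : L, P.pair a α = P.pair a β) : α = β := by
  have h0 : ∀ a : L, P.pair a (α - β) = 0 := fun a => by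
    rw [map_sub, h, sub_self]
  exact sub_eq_zero.mp (P.nondeg_right _ h0)

lemma ext_left {a b : L} (h : ∀ α : L', P.pair a α = P.pair b α) : a = b := by
  have h0 : ∀ α : L', P.pair (a - b) α = 0 := fun α => by
    rw [map_sub, LinearMap.sub_apply, h, sub_self]
  exact sub_eq_zero.mp (P.nondeg_left _ h0)

lemma pair_smul_left (f : R) (a : L) (α : L') :
    P.pair (f • a) α = f * P.pair a α := by
  rw [map_smul, LinearMap.smul_apply, smul_eq_mul]

lemma lie_add_left (a b : L) (α : L') :
    P.lie (a + b) α = P.lie a α + P.lie b α := by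
  apply ext_right P; intro a'
  simp only [map_add, P.lie_spec, P.lr.bracket_add_left, Derivation.add_apply,
    LinearMap.add_apply]
  ring

lemma lie_smul_left (f : R) (a : L) (α : L') :
    P.lie (f • a) α = f • P.lie a α + (P.pair a α) • P.d f := by
  apply ext_right P; intro a'
  simp only [P.lie_spec, bracket_smul_left, map_add, map_sub, map_smul,
    LinearMap.add_apply, LinearMap.sub_apply, LinearMap.smul_apply,
    Derivation.smul_apply, smul_eq_mul, P.d_spec]
  ring

lemma lie'_add_right (α : L') (a b : L) :
    P.lie' α (a + b) = P.lie' α a + P.lie' α b := by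
  apply ext_left P; intro α'
  simp only [P.lie'_spec, map_add, LinearMap.add_apply]
  ring

lemma lie'_smul_right (f : R) (α : L') (a : L) :
    P.lie' α (f • a) = f • P.lie' α a + (P.lr'.anchor α f) • a := by
  apply ext_left P; intro α'
  simp only [P.lie'_spec, map_add, map_smul, LinearMap.add_apply, LinearMap.smul_apply,
    smul_eq_mul, Derivation.leibniz]
  ring


open LieRinehartDualPair in
lemma delta_add_a (a b : L) (α₁ α₂ : L') :
    P.delta (a + b) α₁ α₂ = P.delta a α₁ α₂ + P.delta b α₁ α₂ := by
  simp only [delta, map_add, LinearMap.add_apply]; ring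

open LieRinehartDualPair in
lemma delta_sub_a (a b : L) (α₁ α₂ : L') :
    P.delta (a - b) α₁ α₂ = P.delta a α₁ α₂ - P.delta b α₁ α₂ := by
  simp only [delta, map_sub, LinearMap.sub_apply]; ring

open LieRinehartDualPair in
lemma delta_neg_a (a : L) (α₁ α₂ : L') :
    P.delta (-a) α₁ α₂ = - P.delta a α₁ α₂ := by
  simp only [delta, map_neg, LinearMap.neg_apply]; ring

open LieRinehartDualPair in
lemma delta_smul_a (f : R) (a : L) (α₁ α₂ : L') :
    P.delta (f • a) α₁ α₂ = f * P.delta a α₁ α₂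
      + P.lr'.anchor α₁ f * P.pair a α₂ - P.lr'.anchor α₂ f * P.pair a α₁ := by
  simp only [delta, map_smul, LinearMap.smul_apply, smul_eq_mul, Derivation.leibniz]
  ring

open LieRinehartDualPair in
lemma delta_add_l (a : L) (β γ α₂ : L') :
    P.delta a (β + γ) α₂ = P.delta a β α₂ + P.delta a γ α₂ := by
  simp only [delta, map_add, P.lr'.bracket_add_left _ _ _, Derivation.add_apply]; ring

open LieRinehartDualPair in
lemma delta_add_r (a : L) (α₁ β γ : L') :
    P.delta a α₁ (β + γ) = P.delta a α₁ β + P.delta a α₁ γ := by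
  simp only [delta, map_add, P.lr'.bracket_add_right _ _ _, Derivation.add_apply]; ring

open LieRinehartDualPair in
lemma delta_smul_l (f : R) (a : L) (α₁ α₂ : L') :
    P.delta a (f • α₁) α₂ = f * P.delta a α₁ α₂ := by
  simp only [delta, bracket_smul_left, map_smul, map_sub, LinearMap.sub_apply,
    Derivation.smul_apply, smul_eq_mul, Derivation.leibniz]
  ring

open LieRinehartDualPair in
lemma delta_smul_r (f : R) (a : L) (α₁ α₂ : L') :
    P.delta a α₁ (f • α₂) = f * P.delta a α₁ α₂ := by
  simp only [delta, bracket_smul_right, map_smul, map_add, LinearMap.add_apply,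
    Derivation.smul_apply, smul_eq_mul, Derivation.leibniz]
  ring

open LieRinehartDualPair in
lemma delta_df (a : L) (f : R) (α : L') :
    P.delta a (P.d f) α
      = P.lr'.anchor (P.d f) (P.pair a α) - P.lr.anchor (P.lie' α a) f := by
  have h := P.lie'_spec α (P.d f) a
  rw [P.d_spec, P.d_spec] at h
  simp only [delta, P.d_spec, P.lr'.bracket_antisymm (P.d f) α, map_neg]
  linear_combination h

open LieRinehartDualPair in
lemma delta_df_right (a : L) (α : L') (f : R) :
    P.delta a α (P.d f)
      = P.lr.anchor (P.lie' α a) f - P.lr'.anchor (P.d f) (P.pair a α) := by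
  have h := P.lie'_spec α (P.d f) a
  rw [P.d_spec, P.d_spec] at h
  simp only [delta, P.d_spec]
  linear_combination -h

lemma pair_bracket (a₁ a₂ : L) (β : L') :
    P.pair (P.lr.bracket a₁ a₂) β
      = P.pair a₁ (P.lie a₂ β) - P.lr.anchor a₂ (P.pair a₁ β) := by
  have h := P.lie_spec a₂ a₁ β
  rw [P.lr.bracket_antisymm a₂ a₁, map_neg, LinearMap.neg_apply] at h
  linear_combination -h


open LieRinehartDualPair in
lemma E_add_left (a b : L) (α : L') (f : R) :
    P.E (a + b) α f = P.E a α f + P.E b α f := by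
  simp only [E, lie_add_left, lie'_add_right, map_add, Derivation.add_apply,
    LinearMap.add_apply, Derivation.commutator_apply]
  ring

open LieRinehartDualPair in
lemma E_smul_left (f : R) (a : L) (α : L') (g : R) :
    P.E (f • a) α g = f * P.E a α g
      - P.pair a α * (P.lr'.anchor (P.d f) g + P.lr'.anchor (P.d g) f) := by
  simp only [E, lie_smul_left P, lie'_smul_right P, map_add, map_smul,
    Derivation.add_apply, Derivation.smul_apply, LinearMap.smul_apply, smul_eq_mul,
    Derivation.commutator_apply, Derivation.leibniz]
  ring

open LieRinehartDualPair in
lemma D_add_left (a b a₂ : L) (α₁ α₂ : L') :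
    P.D (a + b) a₂ α₁ α₂ = P.D a a₂ α₁ α₂ + P.D b a₂ α₁ α₂ := by
  simp only [D, deltaBracket, P.lr.bracket_add_left _ _ _, delta_add_a,
    lie_add_left, delta_add_l, delta_add_r, map_add, Derivation.add_apply,
    LinearMap.add_apply]
  ring

open LieRinehartDualPair in
lemma D_antisymm (a₁ a₂ : L) (α₁ α₂ : L') :
    P.D a₂ a₁ α₁ α₂ = - P.D a₁ a₂ α₁ α₂ := by
  simp only [D]
  rw [P.lr.bracket_antisymm a₂ a₁, delta_neg_a]
  ring

open LieRinehartDualPair in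
lemma D_smul_left (f : R) (a₁ a₂ : L) (α₁ α₂ : L') :
    P.D (f • a₁) a₂ α₁ α₂ = f * P.D a₁ a₂ α₁ α₂
      + P.pair a₁ α₂ * P.E a₂ α₁ f - P.pair a₁ α₁ * P.E a₂ α₂ f := by
  simp only [D, deltaBracket, E, bracket_smul_left, delta_sub_a, delta_smul_a,
    lie_smul_left P, delta_add_l, delta_add_r, delta_smul_l, delta_smul_r,
    delta_df, delta_df_right, pair_bracket P, map_add, map_sub, map_smul,
    LinearMap.add_apply, LinearMap.sub_apply, LinearMap.smul_apply,
    Derivation.add_apply, Derivation.smul_apply, smul_eq_mul,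
    Derivation.commutator_apply, Derivation.leibniz]
  ring

end LieRinehartAux

/-- spanning-set criterion for Lie bialgebroids. -/
theorem lie_bialgebroid_spanning_criterion
    (P : LieRinehartDualPair R L L') (S : Set L)
    (hspan : Submodule.span R S = ⊤)
    (hB1 : ∀ a₁ ∈ S, ∀ a₂ ∈ S, ∀ (α₁ α₂ : L'), P.D a₁ a₂ α₁ α₂ = 0)
    (hB2 : ∀ a ∈ S, ∀ (α : L') (f : R), P.E a α f = 0)
    (hB3 : ∀ f g : R, P.lr'.anchor (P.d f) g + P.lr'.anchor (P.d g) f = 0) :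
    ∀ (a₁ a₂ : L) (α₁ α₂ : L'), P.D a₁ a₂ α₁ α₂ = 0 := by
  have hmem : ∀ x : L, x ∈ Submodule.span R S := fun x => hspan ▸ Submodule.mem_top
  have hE : ∀ (a : L) (α : L') (f : R), P.E a α f = 0 := by
    intro a
    refine Submodule.span_induction
      (p := fun a _ => ∀ (α : L') (f : R), P.E a α f = 0)
      (fun x hx => hB2 x hx) ?_ ?_ ?_ (hmem a)
    · intro α f
      have h := LieRinehartAux.E_smul_left P 0 (0 : L) α f
      simpa using h
    · intro x y _ _ ihx ihy α f
      rw [LieRinehartAux.E_add_left P, ihx, ihy, add_zero]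
    · intro r x _ ih α f
      rw [LieRinehartAux.E_smul_left P, ih, hB3]
      ring
  have hDsmul : ∀ (f : R) (a₁ a₂ : L) (α₁ α₂ : L'),
      P.D (f • a₁) a₂ α₁ α₂ = f * P.D a₁ a₂ α₁ α₂ := by
    intro f a₁ a₂ α₁ α₂
    rw [LieRinehartAux.D_smul_left P, hE, hE]
    ring
  have hD0 : ∀ (a₂ : L) (α₁ α₂ : L'), P.D 0 a₂ α₁ α₂ = 0 := by
    intro a₂ α₁ α₂
    have h := hDsmul 0 0 a₂ α₁ α₂
    simpa using h
  have hS : ∀ a₁ ∈ S, ∀ (a₂ : L) (α₁ α₂ : L'), P.D a₁ a₂ α₁ α₂ = 0 := by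
    intro a₁ h₁ a₂
    refine Submodule.span_induction
      (p := fun a₂ _ => ∀ (α₁ α₂ : L'), P.D a₁ a₂ α₁ α₂ = 0)
      (fun x hx α₁ α₂ => hB1 a₁ h₁ x hx α₁ α₂) ?_ ?_ ?_ (hmem a₂)
    · intro α₁ α₂
      rw [LieRinehartAux.D_antisymm P, hD0, neg_zero]
    · intro x y _ _ ihx ihy α₁ α₂
      rw [LieRinehartAux.D_antisymm P, LieRinehartAux.D_add_left P,
        LieRinehartAux.D_antisymm P a₁ x, LieRinehartAux.D_antisymm P a₁ y,
        ihx, ihy]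
      ring
    · intro r x _ ih α₁ α₂
      rw [LieRinehartAux.D_antisymm P, hDsmul,
        LieRinehartAux.D_antisymm P a₁ x, ih]
      ring
  intro a₁
  refine Submodule.span_induction
    (p := fun a₁ _ => ∀ (a₂ : L) (α₁ α₂ : L'), P.D a₁ a₂ α₁ α₂ = 0)
    (fun x hx => hS x hx) hD0 ?_ ?_ (hmem a₁)
  · intro x y _ _ ihx ihy a₂ α₁ α₂
    rw [LieRinehartAux.D_add_left P, ihx, ihy, add_zero]
  · intro r x _ ih a₂ α₁ α₂
    rw [hDsmul, ih, mul_zero]
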